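/- If γ ∈ NC(n) has blocks B_1,...,B_s of cardinalities k_1,...,k_s, then there is an order isomorphism between the fiber [γ] = {π ∈ NCL(n) : c(π) = γ} and the product [1_{k_1}] × ⋯ × [1_{k_s}], where [1_k] = {π ∈ NCL(k) : c(π) = 1_k} is the set of connected non-crossing linked partitions of {1,...,k}. -/

import Mathlib

open scoped Classical


/-- Two blocks `B`, `C` cross: there are `i < k < p < q` with `i, p ∈ B` and `k, q ∈ C`. -/
def Crosses {n : ℕ} (B C : Finset (Fin n)) : Prop :=
  ∃ i k p q : Fin n, i < k ∧ k < p ∧ p < q ∧ i ∈ B ∧ p ∈ B ∧ k ∈ C ∧ q ∈ C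

/-- `π` is a non-crossing linked partition of `{1, …, n}` (encoded as `Fin n`):
its (nonempty) blocks cover `Fin n`, are pairwise non-crossing, any two distinct blocks
intersect in at most one element, and if two distinct blocks intersect in `{j}` then both
blocks have at least two elements and `j` is the minimal element of exactly one of them. -/
def IsNCL (n : ℕ) (π : Finset (Finset (Fin n))) : Prop :=
  (∀ B ∈ π, B.Nonempty) ∧
  (∀ x : Fin n, ∃ B ∈ π, x ∈ B) ∧
  (∀ B ∈ π, ∀ C ∈ π, B ≠ C → ¬ Crosses B C) ∧
  (∀ B ∈ π, ∀ C ∈ π, B ≠ C → (B ∩ C).card ≤ 1 ∧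
    ∀ j : Fin n, B ∩ C = {j} →
      2 ≤ B.card ∧ 2 ≤ C.card ∧
        Xor' (B.min = (j : WithBot (Fin n))) (C.min = (j : WithBot (Fin n))))

/-- `π` is a non-crossing partition: a non-crossing linked partition with pairwise
disjoint blocks. -/
def IsNC (n : ℕ) (π : Finset (Finset (Fin n))) : Prop :=
  IsNCL n π ∧ ∀ B ∈ π, ∀ C ∈ π, B ≠ C → Disjoint B C

/-- `Refines n σ π` (i.e. `σ ⪯ π`): every block of `π` is a union of blocks of `σ`. -/
def Refines (n : ℕ) (σ π : Finset (Finset (Fin n))) : Prop :=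
  ∀ B ∈ π, ∃ S : Finset (Finset (Fin n)), S ⊆ σ ∧ B = S.sup id

/-- `a` and `b` lie in a common block of `π`. -/
def Linked {n : ℕ} (π : Finset (Finset (Fin n))) (a b : Fin n) : Prop :=
  ∃ B ∈ π, a ∈ B ∧ b ∈ B

/-- `a` and `b` are connected in `π`: joined by a chain of pairwise intersecting blocks. -/
def Connected {n : ℕ} (π : Finset (Finset (Fin n))) (a b : Fin n) : Prop :=
  Relation.ReflTransGen (Linked π) a b

/-- The partition `c(π)` of `Fin n` into the connected components of `π`. -/
noncomputable def cPart (n : ℕ) (π : Finset (Finset (Fin n))) : Finset (Finset (Fin n)) :=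
  Finset.univ.image fun i => Finset.univ.filter (Connected π i)

/-- Embedding of the unbarred copy: `i ↦ 2 i` in the interleaved order
`1, 1̄, 2, 2̄, …, n, n̄`. -/
def ueEmb (n : ℕ) (i : Fin n) : Fin (2 * n) := ⟨2 * i.1, by have := i.isLt; omega⟩

/-- Embedding of the barred copy: `i ↦ 2 i + 1` in the interleaved order. -/
def beEmb (n : ℕ) (i : Fin n) : Fin (2 * n) := ⟨2 * i.1 + 1, by have := i.isLt; omega⟩

/-- The union `γ ∪ γ'` inside the interleaved ordered set `1, 1̄, 2, 2̄, …, n, n̄`. -/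
def interleave (n : ℕ) (γ γ' : Finset (Finset (Fin n))) : Finset (Finset (Fin (2 * n))) :=
  γ.image (Finset.image (ueEmb n)) ∪ γ'.image (Finset.image (beEmb n))

/-- `γ'` is the Kreweras complement of `γ`: the largest non-crossing partition (in the
refinement order) such that `γ ∪ γ'` is non-crossing in the interleaved order. -/
def IsKr (n : ℕ) (γ γ' : Finset (Finset (Fin n))) : Prop :=
  IsNC n γ' ∧ IsNC (2 * n) (interleave n γ γ') ∧
  ∀ τ, IsNC n τ → IsNC (2 * n) (interleave n γ τ) → Refines n τ γ'

/-- `B` is an exterior block of `γ`: no other block `D` of `γ` contains elements `l, s`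
with `l = min B`, or `l < min B` and `max B < s`. -/
def IsExteriorIn (n : ℕ) (γ : Finset (Finset (Fin n))) (B : Finset (Fin n)) : Prop :=
  B ∈ γ ∧ ∀ D ∈ γ, D ≠ B → ∀ l ∈ D, ∀ s ∈ D,
    ¬((l ∈ B ∧ ∀ b ∈ B, l ≤ b) ∨ (∀ b ∈ B, l < b ∧ b < s))

/-- Halving map `Fin (2n) → Fin n`. -/
def halfEmb (n : ℕ) (i : Fin (2 * n)) : Fin n := ⟨i.1 / 2, by have := i.isLt; omega⟩

/-- `γ₋`: the restriction of `γ ∈ NC(2n)` to the odd elements `{1, 3, …, 2n − 1}`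
(indices `≡ 0 mod 2` in the `0`-based encoding), identified with a partition of `Fin n`. -/
noncomputable def minusPart (n : ℕ) (γ : Finset (Finset (Fin (2 * n)))) :
    Finset (Finset (Fin n)) :=
  (γ.filter fun B => ∀ i ∈ B, i.1 % 2 = 0).image (Finset.image (halfEmb n))

/-- `γ₊`: the restriction of `γ ∈ NC(2n)` to the even elements `{2, 4, …, 2n}`,
identified with a partition of `Fin n`. -/
noncomputable def plusPart (n : ℕ) (γ : Finset (Finset (Fin (2 * n)))) :
    Finset (Finset (Fin n)) :=
  (γ.filter fun B => ∀ i ∈ B, i.1 % 2 = 1).image (Finset.image (halfEmb n))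

/-- `γ ∈ NC_s(2n)`: a non-crossing partition of `{1, …, 2n}` all of whose blocks have
elements of constant parity, with `γ₊ = Kr(γ₋)`. -/
def NCs (n : ℕ) (γ : Finset (Finset (Fin (2 * n)))) : Prop :=
  IsNC (2 * n) γ ∧
  (∀ B ∈ γ, (∀ i ∈ B, i.1 % 2 = 0) ∨ (∀ i ∈ B, i.1 % 2 = 1)) ∧
  IsKr n (minusPart n γ) (plusPart n γ)

/-- The restriction of `γ` to a subset `S`. -/
noncomputable def restrictTo (n : ℕ) (γ : Finset (Finset (Fin n))) (S : Finset (Fin n)) :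
    Finset (Finset (Fin n)) :=
  (γ.image fun B => B ∩ S).filter Finset.Nonempty

/-- A planar rooted tree: a root together with a linearly ordered (left to right) list of
subtrees. -/
inductive PTree where
  | node : List PTree → PTree

mutual
/-- Number of vertices of a planar rooted tree. -/
def PTree.size : PTree → ℕ
  | .node ts => 1 + sizeList ts
def sizeList : List PTree → ℕ
  | [] => 0
  | t :: ts => PTree.size t + sizeList ts
end

/-- Depth-first indices of the roots of a list of trees, the first root getting index `k`. -/
def childRoots : List PTree → ℕ → List ℕ
  | [], _ => []
  | t :: ts, k => k :: childRoots ts (k + PTree.size t)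

mutual
/-- The blocks of the constituent elementary trees (a root together with its offsprings,
provided there is at least one offspring) of a planar tree, with vertices numbered in
depth-first (left-first) order starting at `k`. -/
def PTree.blk : PTree → ℕ → List (List ℕ)
  | .node ts, k =>
      (if ts.isEmpty then [] else [k :: childRoots ts (k + 1)]) ++ blkList ts (k + 1)
def blkList : List PTree → ℕ → List (List ℕ)
  | [], _ => []
  | t :: ts, k => PTree.blk t k ++ blkList ts (k + PTree.size t)
end

/-- The blocks of the elementary trees constituting a planar tree, in depth-first
numbering starting at `0`; a single vertex is itself an elementary tree. -/
def treeBlocks : PTree → List (List ℕ)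
  | .node [] => [[0]]
  | t => t.blk 0

/-- Convert a list of (`0`-based) vertex numbers into a block of `Fin n`. -/
def listToBlock (n : ℕ) (l : List ℕ) : Finset (Fin n) :=
  (l.filterMap fun i => if h : i < n then some (⟨i, h⟩ : Fin n) else none).toFinset

mutual
/-- Evaluation of a planar rooted tree: the product over its vertices of `f k`, where `k`
is the number of offsprings of the vertex (so an elementary tree with `m` vertices
contributes `f (m − 1)`). -/
def PTree.eval (f : ℕ → ℂ) : PTree → ℂ
  | .node ts => f ts.length * evalList f ts
def evalList (f : ℕ → ℂ) : List PTree → ℂ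
  | [] => 1
  | t :: ts => PTree.eval f t * evalList f ts
end

/-- A bicolor planar rooted tree: each subtree carries a color (`true` = color 1,
`false` = color 0). -/
inductive BTree where
  | node : List (Bool × BTree) → BTree

mutual
/-- Number of vertices of a bicolor planar tree. -/
def BTree.size : BTree → ℕ
  | .node ts => 1 + bsizeList ts
def bsizeList : List (Bool × BTree) → ℕ
  | [] => 0
  | (_, t) :: ts => BTree.size t + bsizeList ts
end

mutual
/-- Validity of a bicolor planar tree: at every vertex, the offsprings of color 1 precede
the offsprings of color 0. -/
def BTree.Valid : BTree → Prop
  | .node ts => List.Chain' (fun a b => b ≤ a) (ts.map Prod.fst) ∧ bvalidList ts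
def bvalidList : List (Bool × BTree) → Prop
  | [] => True
  | (_, t) :: ts => BTree.Valid t ∧ bvalidList ts
end

/-- A bicolor tree is elementary when all offsprings of the root are leaves. -/
def BTree.IsElementary : BTree → Prop
  | .node ts => ∀ p ∈ ts, p.2 = BTree.node []
/-- The term `t_π[X_1, …, X_n]`: the product over blocks `B = (i_1 < … < i_l)` of `π` of
`t_{l−1}(X_{i_1}, …, X_{i_l})`, times the product over `k ∈ s(π)` (the elements that are
not the minimal element of any block) of `t_0(X_k)`. Here `t m` stands for `t_{m−1}`,
taking `m` arguments. -/
noncomputable def tTerm {A : Type*} [Ring A] (t : ∀ m : ℕ, (Fin m → A) → ℂ)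
    (n : ℕ) (π : Finset (Finset (Fin n))) (X : Fin n → A) : ℂ :=
  (∏ B ∈ π, t B.card fun j => X (B.orderIsoOfFin rfl j).1) *
  ∏ k ∈ Finset.univ.filter
      (fun k : Fin n => ∀ B ∈ π, B.min ≠ (k : WithBot (Fin n))),
    t 1 fun _ => X k

/-- The family `t` satisfies the defining recurrence of the `t`-coefficients:
`φ(X_1 ⋯ X_n) = Σ_{π ∈ NCL(n)} t_π[X_1, …, X_n]`. -/
def TRec {A : Type*} [Ring A] [Algebra ℂ A] (φ : A →ₗ[ℂ] ℂ)
    (t : ∀ m : ℕ, (Fin m → A) → ℂ) : Prop :=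
  ∀ (n : ℕ) (X : Fin (n + 1) → A),
    φ (List.ofFn X).prod =
      ∑ π ∈ Finset.univ.filter (fun π => IsNCL (n + 1) π), tTerm t (n + 1) π X

/-- The term `κ_γ[X_1, …, X_n]`: the product over blocks `B = (i_1 < … < i_l)` of `γ` of
`κ_l(X_{i_1}, …, X_{i_l})`. -/
noncomputable def cumTerm {A : Type*} [Ring A] (κ : ∀ m : ℕ, (Fin m → A) → ℂ)
    (n : ℕ) (γ : Finset (Finset (Fin n))) (X : Fin n → A) : ℂ :=
  ∏ B ∈ γ, κ B.card fun j => X (B.orderIsoOfFin rfl j).1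

/-- The family `κ` satisfies the moment–cumulant recurrence
`φ(X_1 ⋯ X_n) = Σ_{γ ∈ NC(n)} κ_γ[X_1, …, X_n]` defining the free cumulants. -/
def CumRec {A : Type*} [Ring A] [Algebra ℂ A] (φ : A →ₗ[ℂ] ℂ)
    (κ : ∀ m : ℕ, (Fin m → A) → ℂ) : Prop :=
  ∀ (n : ℕ) (X : Fin (n + 1) → A),
    φ (List.ofFn X).prod =
      ∑ γ ∈ Finset.univ.filter (fun γ => IsNC (n + 1) γ), cumTerm κ (n + 1) γ X

/-- Free independence of a family of unital subalgebras: alternating products of centered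
elements have vanishing expectation. -/
def FreeFamily {A : Type*} [Ring A] [Algebra ℂ A] (φ : A →ₗ[ℂ] ℂ) {I : Type*}
    (S : I → Subalgebra ℂ A) : Prop :=
  ∀ (n : ℕ) (a : Fin (n + 1) → A) (idx : Fin (n + 1) → I),
    (∀ k, a k ∈ S (idx k)) → (∀ k, φ (a k) = 0) →
    (∀ k : Fin n, idx k.castSucc ≠ idx k.succ) →
    φ (List.ofFn a).prod = 0

/-- Two elements are free if the unital subalgebras they generate are free. -/
def FreePair {A : Type*} [Ring A] [Algebra ℂ A] (φ : A →ₗ[ℂ] ℂ) (X Y : A) : Prop :=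
  FreeFamily φ fun b : Bool =>
    if b = true then Algebra.adjoin ℂ {X} else Algebra.adjoin ℂ {Y}


section FiberAux
open Finset
variable {n : ℕ}

/-- Embedding `Fin B.card ↪o Fin n` onto `B`. -/
noncomputable def fe (B : Finset (Fin n)) : Fin B.card ↪o Fin n := B.orderEmbOfFin rfl

lemma fe_mem (B : Finset (Fin n)) (j : Fin B.card) : fe B j ∈ B :=
  Finset.orderEmbOfFin_mem _ _ _

lemma fe_surj (B : Finset (Fin n)) {x : Fin n} (hx : x ∈ B) : ∃ j, fe B j = x := by
  have h := B.range_orderEmbOfFin (rfl : B.card = B.card)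
  have : x ∈ Set.range (B.orderEmbOfFin rfl) := by rw [h]; exact hx
  exact this

noncomputable def upB (B : Finset (Fin n)) (Q : Finset (Fin B.card)) : Finset (Fin n) :=
  Q.image (fe B)

noncomputable def dwnB (B : Finset (Fin n)) (P : Finset (Fin n)) : Finset (Fin B.card) :=
  Finset.univ.filter (fun j => fe B j ∈ P)

lemma mem_upB {B : Finset (Fin n)} {Q : Finset (Fin B.card)} {x : Fin n} :
    x ∈ upB B Q ↔ ∃ j ∈ Q, fe B j = x := by simp [upB]

lemma mem_dwnB {B : Finset (Fin n)} {P : Finset (Fin n)} {j : Fin B.card} :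
    j ∈ dwnB B P ↔ fe B j ∈ P := by simp [dwnB]

lemma upB_subset (B : Finset (Fin n)) (Q : Finset (Fin B.card)) : upB B Q ⊆ B := by
  intro x hx; rcases mem_upB.1 hx with ⟨j, _, rfl⟩; exact fe_mem B j

lemma upB_dwnB {B P : Finset (Fin n)} (hP : P ⊆ B) : upB B (dwnB B P) = P := by
  ext x
  simp only [mem_upB, mem_dwnB]
  constructor
  · rintro ⟨j, hj, rfl⟩; exact hj
  · intro hx; rcases fe_surj B (hP hx) with ⟨j, rfl⟩; exact ⟨j, hx, rfl⟩

lemma dwnB_upB {B : Finset (Fin n)} (Q : Finset (Fin B.card)) : dwnB B (upB B Q) = Q := by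
  ext j
  simp only [mem_dwnB, mem_upB]
  constructor
  · rintro ⟨j', hj', h⟩; rwa [(fe B).injective h] at hj'
  · intro h; exact ⟨j, h, rfl⟩

lemma upB_inj {B : Finset (Fin n)} {Q Q' : Finset (Fin B.card)}
    (h : upB B Q = upB B Q') : Q = Q' := by
  rw [← dwnB_upB Q, h, dwnB_upB]

lemma card_upB (B : Finset (Fin n)) (Q : Finset (Fin B.card)) : (upB B Q).card = Q.card :=
  Finset.card_image_of_injective _ (fe B).injective

lemma upB_inter (B : Finset (Fin n)) (Q Q' : Finset (Fin B.card)) :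
    upB B (Q ∩ Q') = upB B Q ∩ upB B Q' :=
  Finset.image_inter _ _ (fe B).injective

lemma upB_singleton (B : Finset (Fin n)) (j : Fin B.card) : upB B {j} = {fe B j} := by
  simp [upB]

lemma upB_nonempty {B : Finset (Fin n)} {Q : Finset (Fin B.card)} (h : Q.Nonempty) :
    (upB B Q).Nonempty := h.image _

lemma crosses_upB {B : Finset (Fin n)} {Q Q' : Finset (Fin B.card)} :
    Crosses (upB B Q) (upB B Q') ↔ Crosses Q Q' := by
  constructor
  · rintro ⟨i, k, p, q, h1, h2, h3, hi, hp, hk, hq⟩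
    rcases mem_upB.1 hi with ⟨i', hi', rfl⟩
    rcases mem_upB.1 hp with ⟨p', hp', rfl⟩
    rcases mem_upB.1 hk with ⟨k', hk', rfl⟩
    rcases mem_upB.1 hq with ⟨q', hq', rfl⟩
    exact ⟨i', k', p', q', (fe B).lt_iff_lt.1 h1, (fe B).lt_iff_lt.1 h2,
      (fe B).lt_iff_lt.1 h3, hi', hp', hk', hq'⟩
  · rintro ⟨i, k, p, q, h1, h2, h3, hi, hp, hk, hq⟩
    exact ⟨fe B i, fe B k, fe B p, fe B q, (fe B).lt_iff_lt.2 h1, (fe B).lt_iff_lt.2 h2,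
      (fe B).lt_iff_lt.2 h3, mem_upB.2 ⟨i, hi, rfl⟩, mem_upB.2 ⟨p, hp, rfl⟩,
      mem_upB.2 ⟨k, hk, rfl⟩, mem_upB.2 ⟨q, hq, rfl⟩⟩

lemma min_eq_coe_iff {α : Type*} [LinearOrder α] {s : Finset α} {a : α} :
    s.min = (a : WithTop α) ↔ a ∈ s ∧ ∀ b ∈ s, a ≤ b := by
  constructor
  · intro h
    exact ⟨Finset.mem_of_min h, fun b hb => Finset.min_le_of_eq hb h⟩
  · rintro ⟨ha, hle⟩
    exact le_antisymm (Finset.min_le ha) (Finset.le_min (by exact_mod_cast hle))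

lemma min_upB {B : Finset (Fin n)} {Q : Finset (Fin B.card)} {j : Fin B.card} :
    (upB B Q).min = ((fe B j : Fin n) : WithTop (Fin n)) ↔
      Q.min = (j : WithTop (Fin B.card)) := by
  rw [min_eq_coe_iff, min_eq_coe_iff]
  constructor
  · rintro ⟨h1, h2⟩
    rcases mem_upB.1 h1 with ⟨j', hj', hj'e⟩
    have hj : j' = j := (fe B).injective hj'e
    subst hj
    exact ⟨hj', fun b hb => (fe B).le_iff_le.1 (h2 _ (mem_upB.2 ⟨b, hb, rfl⟩))⟩
  · rintro ⟨h1, h2⟩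
    refine ⟨mem_upB.2 ⟨j, h1, rfl⟩, ?_⟩
    intro b hb
    rcases mem_upB.1 hb with ⟨b', hb', rfl⟩
    exact (fe B).le_iff_le.2 (h2 _ hb')

/-- Transfer of the pairwise NCL condition along `upB`. -/
lemma pair_upB {B : Finset (Fin n)} (Q Q' : Finset (Fin B.card)) :
    ((upB B Q ∩ upB B Q').card ≤ 1 ∧
      ∀ x : Fin n, upB B Q ∩ upB B Q' = {x} →
        2 ≤ (upB B Q).card ∧ 2 ≤ (upB B Q').card ∧
          Xor' ((upB B Q).min = (x : WithBot (Fin n)))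
            ((upB B Q').min = (x : WithBot (Fin n)))) ↔
    ((Q ∩ Q').card ≤ 1 ∧
      ∀ j : Fin B.card, Q ∩ Q' = {j} →
        2 ≤ Q.card ∧ 2 ≤ Q'.card ∧
          Xor' (Q.min = (j : WithBot (Fin B.card)))
            (Q'.min = (j : WithBot (Fin B.card)))) := by
  rw [← upB_inter, card_upB]
  constructor
  · rintro ⟨h1, h2⟩
    refine ⟨h1, fun j hj => ?_⟩
    have := h2 (fe B j) (by rw [hj, upB_singleton])
    rw [card_upB, card_upB] at this
    refine ⟨this.1, this.2.1, ?_⟩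
    have hx1 : ((upB B Q).min = ((fe B j : Fin n) : WithBot (Fin n))) ↔
        (Q.min = (j : WithBot (Fin B.card))) := min_upB
    have hx2 : ((upB B Q').min = ((fe B j : Fin n) : WithBot (Fin n))) ↔
        (Q'.min = (j : WithBot (Fin B.card))) := min_upB
    unfold Xor' at this ⊢
    rw [hx1, hx2] at this
    exact this.2.2
  · rintro ⟨h1, h2⟩
    refine ⟨h1, fun x hx => ?_⟩
    have hxB : x ∈ upB B (Q ∩ Q') := by rw [hx]; exact Finset.mem_singleton_self x
    rcases mem_upB.1 hxB with ⟨j, _, rfl⟩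
    have hQQ : Q ∩ Q' = {j} := upB_inj (by rw [hx, upB_singleton])
    have := h2 j hQQ
    rw [card_upB, card_upB]
    refine ⟨this.1, this.2.1, ?_⟩
    have hx1 : ((upB B Q).min = ((fe B j : Fin n) : WithBot (Fin n))) ↔
        (Q.min = (j : WithBot (Fin B.card))) := min_upB
    have hx2 : ((upB B Q').min = ((fe B j : Fin n) : WithBot (Fin n))) ↔
        (Q'.min = (j : WithBot (Fin B.card))) := min_upB
    unfold Xor' at this ⊢
    rw [hx1, hx2]
    exact this.2.2

lemma dwnB_sup (B : Finset (Fin n)) (S : Finset (Finset (Fin n))) :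
    dwnB B (S.sup id) = S.sup (dwnB B) := by
  ext j; simp [mem_dwnB, Finset.mem_sup]

lemma upB_sup (B : Finset (Fin n)) (S : Finset (Finset (Fin B.card))) :
    upB B (S.sup id) = S.sup (upB B) := by
  ext x
  simp only [mem_upB, Finset.mem_sup, id_eq]
  constructor
  · rintro ⟨j, ⟨Q, hQ, hj⟩, rfl⟩; exact ⟨Q, hQ, j, hj, rfl⟩
  · rintro ⟨Q, hQ, j, hj, rfl⟩
    exact ⟨j, ⟨Q, hQ, hj⟩, rfl⟩

/-- Restriction of `π` to block `B`. -/
noncomputable def resD (B : Finset (Fin n)) (π : Finset (Finset (Fin n))) :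
    Finset (Finset (Fin B.card)) :=
  (π.filter (fun P => P ⊆ B)).image (dwnB B)

lemma mem_resD {B : Finset (Fin n)} {π : Finset (Finset (Fin n))}
    {Q : Finset (Fin B.card)} :
    Q ∈ resD B π ↔ ∃ P ∈ π, P ⊆ B ∧ dwnB B P = Q := by
  simp only [resD, Finset.mem_image, Finset.mem_filter]
  constructor
  · rintro ⟨P, ⟨h1, h2⟩, h3⟩; exact ⟨P, h1, h2, h3⟩
  · rintro ⟨P, h1, h2, h3⟩; exact ⟨P, ⟨h1, h2⟩, h3⟩

/-- Gluing of a family of partitions of the blocks of `γ`. -/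
noncomputable def glueU (γ : Finset (Finset (Fin n)))
    (fam : ∀ B : {B : Finset (Fin n) // B ∈ γ}, Finset (Finset (Fin B.1.card))) :
    Finset (Finset (Fin n)) :=
  γ.attach.biUnion (fun B => (fam B).image (upB B.1))

lemma mem_glueU {γ : Finset (Finset (Fin n))}
    {fam : ∀ B : {B : Finset (Fin n) // B ∈ γ}, Finset (Finset (Fin B.1.card))}
    {P : Finset (Fin n)} :
    P ∈ glueU γ fam ↔ ∃ B : {B : Finset (Fin n) // B ∈ γ}, ∃ Q ∈ fam B, upB B.1 Q = P := by
  simp only [glueU, Finset.mem_biUnion, Finset.mem_attach, Finset.mem_image, true_and]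

end FiberAux

section FiberAux2
open Finset
variable {n : ℕ}

lemma linked_symm {π : Finset (Finset (Fin n))} {a b : Fin n} (h : Linked π a b) :
    Linked π b a := by rcases h with ⟨B, h1, h2, h3⟩; exact ⟨B, h1, h3, h2⟩

lemma connected_symm {π : Finset (Finset (Fin n))} {a b : Fin n} (h : Connected π a b) :
    Connected π b a := by
  induction h with
  | refl => exact .refl
  | tail _ h2 ih => exact .head (linked_symm h2) ih

/-- Connected component of `x`. -/
noncomputable def compP (π : Finset (Finset (Fin n))) (x : Fin n) : Finset (Fin n) :=
  Finset.univ.filter (Connected π x)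

lemma mem_compP {π : Finset (Finset (Fin n))} {x y : Fin n} :
    y ∈ compP π x ↔ Connected π x y := by simp [compP]

lemma compP_mem_cPart (π : Finset (Finset (Fin n))) (x : Fin n) :
    compP π x ∈ cPart n π := Finset.mem_image.2 ⟨x, Finset.mem_univ x, rfl⟩

lemma compP_eq_of_connected {π : Finset (Finset (Fin n))} {x y : Fin n}
    (h : Connected π x y) : compP π x = compP π y := by
  ext z
  simp only [mem_compP]
  exact ⟨fun hz => .trans (connected_symm h) hz, fun hz => .trans h hz⟩

lemma comp_eq_block {π γ : Finset (Finset (Fin n))} (hc : cPart n π = γ)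
    {B : Finset (Fin n)} (hB : B ∈ γ) {x : Fin n} (hx : x ∈ B) : compP π x = B := by
  rw [← hc] at hB
  rcases Finset.mem_image.1 hB with ⟨i, _, hi⟩
  have hi' : compP π i = B := hi
  have hix : Connected π i x := by
    have : x ∈ compP π i := by rw [hi']; exact hx
    exact mem_compP.1 this
  rw [compP_eq_of_connected hix] at hi'
  exact hi'

lemma block_subset_comp {π : Finset (Finset (Fin n))} {P : Finset (Fin n)}
    (hP : P ∈ π) {x : Fin n} (hx : x ∈ P) : P ⊆ compP π x := by
  intro y hy
  exact mem_compP.2 (Relation.ReflTransGen.single ⟨P, hP, hx, hy⟩)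

lemma block_subset_block {π γ : Finset (Finset (Fin n))} (hc : cPart n π = γ)
    {P B : Finset (Fin n)} (hP : P ∈ π) {x : Fin n} (hx : x ∈ P) (hB : B ∈ γ)
    (hxB : x ∈ B) : P ⊆ B := by
  rw [← comp_eq_block hc hB hxB]
  exact block_subset_comp hP hx

lemma exists_block {π γ : Finset (Finset (Fin n))} (hπ : IsNCL n π)
    (hc : cPart n π = γ) {P : Finset (Fin n)} (hP : P ∈ π) : ∃ B ∈ γ, P ⊆ B := by
  rcases hπ.1 P hP with ⟨x, hx⟩
  refine ⟨compP π x, ?_, block_subset_comp hP hx⟩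
  rw [← hc]
  exact compP_mem_cPart π x

lemma connected_down {π γ : Finset (Finset (Fin n))} (hc : cPart n π = γ)
    {B : Finset (Fin n)} (hB : B ∈ γ) {x y : Fin n} (h : Connected π x y) (hx : x ∈ B) :
    y ∈ B ∧ ∀ j j' : Fin B.card, fe B j = x → fe B j' = y →
      Connected (resD B π) j j' := by
  induction h with
  | refl =>
      refine ⟨hx, fun j j' h1 h2 => ?_⟩
      have : j = j' := (fe B).injective (h1.trans h2.symm)
      subst this
      exact .refl
  | tail _ h2 ih =>
      obtain ⟨hbB, hconn⟩ := ih
      rcases h2 with ⟨P, hP, hbP, hcP⟩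
      have hPB : P ⊆ B := block_subset_block hc hP hbP hB hbB
      refine ⟨hPB hcP, fun j j' h1 h3 => ?_⟩
      rcases fe_surj B hbB with ⟨jb, hjb⟩
      refine .tail (hconn j jb h1 hjb) ?_
      exact ⟨dwnB B P, mem_resD.2 ⟨P, hP, hPB, rfl⟩,
        mem_dwnB.2 (by rw [hjb]; exact hbP), mem_dwnB.2 (by rw [h3]; exact hcP)⟩

lemma connected_up {γ : Finset (Finset (Fin n))}
    {fam : ∀ B : {B : Finset (Fin n) // B ∈ γ}, Finset (Finset (Fin B.1.card))}
    (B : {B : Finset (Fin n) // B ∈ γ}) {j j' : Fin B.1.card}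
    (h : Connected (fam B) j j') :
    Connected (glueU γ fam) (fe B.1 j) (fe B.1 j') := by
  induction h with
  | refl => exact .refl
  | tail _ h2 ih =>
      rcases h2 with ⟨Q, hQ, hb, hc⟩
      exact .tail ih ⟨upB B.1 Q, mem_glueU.2 ⟨B, Q, hQ, rfl⟩,
        mem_upB.2 ⟨_, hb, rfl⟩, mem_upB.2 ⟨_, hc, rfl⟩⟩

lemma glue_stay {γ : Finset (Finset (Fin n))} (hγ : IsNC n γ)
    {fam : ∀ B : {B : Finset (Fin n) // B ∈ γ}, Finset (Finset (Fin B.1.card))}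
    {B : Finset (Fin n)} (hB : B ∈ γ) {x y : Fin n}
    (h : Connected (glueU γ fam) x y) (hx : x ∈ B) : y ∈ B := by
  induction h with
  | refl => exact hx
  | tail _ h2 ih =>
      rcases h2 with ⟨P, hP, hb, hy⟩
      rcases mem_glueU.1 hP with ⟨B', Q, hQ, rfl⟩
      have hbB' : _ ∈ B'.1 := upB_subset B'.1 Q hb
      have hBB' : B'.1 = B := by
        by_contra hne
        exact Finset.disjoint_left.1 (hγ.2 B'.1 B'.2 B hB hne) hbB' ih
      rw [← hBB']
      exact upB_subset B'.1 Q hy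

lemma all_conn {k : ℕ} {σ : Finset (Finset (Fin k))}
    (h : cPart k σ = {Finset.univ}) (j j' : Fin k) : Connected σ j j' := by
  have h1 : compP σ j ∈ cPart k σ := compP_mem_cPart σ j
  rw [h, Finset.mem_singleton] at h1
  have : j' ∈ compP σ j := by rw [h1]; exact Finset.mem_univ j'
  exact mem_compP.1 this

lemma cPart_eq_singleton {k : ℕ} {σ : Finset (Finset (Fin k))} (hk : 0 < k)
    (h : ∀ j j' : Fin k, Connected σ j j') : cPart k σ = {Finset.univ} := by
  have hne : (Finset.univ : Finset (Fin k)).Nonempty := ⟨⟨0, hk⟩, Finset.mem_univ _⟩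
  unfold cPart
  rw [Finset.image_congr (g := fun _ => Finset.univ) ?_, Finset.image_const hne]
  intro i _
  ext j
  simp only [Finset.mem_filter, Finset.mem_univ, true_and, iff_true]
  exact h i j

lemma cPart_eq_of {π γ : Finset (Finset (Fin n))}
    (h1 : ∀ i : Fin n, compP π i ∈ γ)
    (h2 : ∀ B ∈ γ, ∃ i : Fin n, compP π i = B) : cPart n π = γ := by
  ext C
  constructor
  · intro hC
    rcases Finset.mem_image.1 hC with ⟨i, _, rfl⟩
    exact h1 i
  · intro hC
    rcases h2 C hC with ⟨i, rfl⟩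
    exact compP_mem_cPart π i

end FiberAux2

section FiberAux3
open Finset
variable {n : ℕ}

theorem resD_mem_fiber {π γ : Finset (Finset (Fin n))} (hπ : IsNCL n π)
    (hc : cPart n π = γ) {B : Finset (Fin n)} (hB : B ∈ γ) :
    IsNCL B.card (resD B π) ∧ cPart B.card (resD B π) = {Finset.univ} := by
  have hBne : B.Nonempty := by
    rw [← hc] at hB
    rcases Finset.mem_image.1 hB with ⟨i, _, hi⟩
    exact ⟨i, by rw [← hi]; exact mem_compP.2 .refl⟩
  constructor
  · refine ⟨?_, ?_, ?_, ?_⟩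
    · -- nonempty blocks
      intro Q hQ
      rcases mem_resD.1 hQ with ⟨P, hP, hPB, rfl⟩
      rcases hπ.1 P hP with ⟨x, hx⟩
      rcases fe_surj B (hPB hx) with ⟨j, hj⟩
      exact ⟨j, mem_dwnB.2 (by rw [hj]; exact hx)⟩
    · -- cover
      intro j
      rcases hπ.2.1 (fe B j) with ⟨P, hP, hjP⟩
      have hPB : P ⊆ B := block_subset_block hc hP hjP hB (fe_mem B j)
      exact ⟨dwnB B P, mem_resD.2 ⟨P, hP, hPB, rfl⟩, mem_dwnB.2 hjP⟩
    · -- non-crossing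
      intro Q hQ Q' hQ' hne hcr
      rcases mem_resD.1 hQ with ⟨P, hP, hPB, rfl⟩
      rcases mem_resD.1 hQ' with ⟨P', hP', hP'B, rfl⟩
      have hPP' : P ≠ P' := by rintro rfl; exact hne rfl
      have : Crosses (upB B (dwnB B P)) (upB B (dwnB B P')) := crosses_upB.2 hcr
      rw [upB_dwnB hPB, upB_dwnB hP'B] at this
      exact hπ.2.2.1 P hP P' hP' hPP' this
    · -- pairwise condition
      intro Q hQ Q' hQ' hne
      rcases mem_resD.1 hQ with ⟨P, hP, hPB, rfl⟩
      rcases mem_resD.1 hQ' with ⟨P', hP', hP'B, rfl⟩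
      have hPP' : P ≠ P' := by rintro rfl; exact hne rfl
      refine (pair_upB _ _).1 ?_
      rw [upB_dwnB hPB, upB_dwnB hP'B]
      exact hπ.2.2.2 P hP P' hP' hPP'
  · -- cPart is the one-block partition
    refine cPart_eq_singleton (Finset.card_pos.2 hBne) (fun j j' => ?_)
    have hconn : Connected π (fe B j) (fe B j') := by
      have h1 : compP π (fe B j) = B := comp_eq_block hc hB (fe_mem B j)
      have : fe B j' ∈ compP π (fe B j) := by rw [h1]; exact fe_mem B j'
      exact mem_compP.1 this
    exact (connected_down hc hB hconn (fe_mem B j)).2 j j' rfl rfl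

theorem glueU_mem_fiber {γ : Finset (Finset (Fin n))} (hγ : IsNC n γ)
    (fam : ∀ B : {B : Finset (Fin n) // B ∈ γ}, Finset (Finset (Fin B.1.card)))
    (hfam : ∀ B, IsNCL B.1.card (fam B) ∧
      cPart B.1.card (fam B) = {(Finset.univ : Finset (Fin B.1.card))}) :
    IsNCL n (glueU γ fam) ∧ cPart n (glueU γ fam) = γ := by
  have compP_glue : ∀ {B : Finset (Fin n)}, B ∈ γ → ∀ {i : Fin n}, i ∈ B →
      compP (glueU γ fam) i = B := by
    intro B hB i hi
    apply Finset.Subset.antisymm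
    · intro y hy
      exact glue_stay hγ hB (mem_compP.1 hy) hi
    · intro y hy
      rcases fe_surj B hi with ⟨j, hj⟩
      rcases fe_surj B hy with ⟨j', hj'⟩
      have := connected_up (fam := fam) ⟨B, hB⟩ (all_conn (hfam ⟨B, hB⟩).2 j j')
      rw [hj, hj'] at this
      exact mem_compP.2 this
  constructor
  · refine ⟨?_, ?_, ?_, ?_⟩
    · intro P hP
      rcases mem_glueU.1 hP with ⟨B, Q, hQ, rfl⟩
      exact upB_nonempty ((hfam B).1.1 Q hQ)
    · intro x
      rcases hγ.1.2.1 x with ⟨B, hB, hxB⟩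
      rcases fe_surj B hxB with ⟨j, hj⟩
      rcases (hfam ⟨B, hB⟩).1.2.1 j with ⟨Q, hQ, hjQ⟩
      exact ⟨upB B Q, mem_glueU.2 ⟨⟨B, hB⟩, Q, hQ, rfl⟩, mem_upB.2 ⟨j, hjQ, hj⟩⟩
    · intro P hP P' hP' hne hcr
      rcases mem_glueU.1 hP with ⟨B, Q, hQ, rfl⟩
      rcases mem_glueU.1 hP' with ⟨B', Q', hQ', rfl⟩
      by_cases hBB' : B = B'
      · subst hBB'
        have hQQ' : Q ≠ Q' := fun h => hne (by rw [h])
        exact (hfam B).1.2.2.1 Q hQ Q' hQ' hQQ' (crosses_upB.1 hcr)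
      · have hBne : B.1 ≠ B'.1 := fun h => hBB' (Subtype.ext h)
        rcases hcr with ⟨i, k, p, q, h1, h2, h3, hi, hp, hk, hq⟩
        exact hγ.1.2.2.1 B.1 B.2 B'.1 B'.2 hBne
          ⟨i, k, p, q, h1, h2, h3, upB_subset _ _ hi, upB_subset _ _ hp,
            upB_subset _ _ hk, upB_subset _ _ hq⟩
    · intro P hP P' hP' hne
      rcases mem_glueU.1 hP with ⟨B, Q, hQ, rfl⟩
      rcases mem_glueU.1 hP' with ⟨B', Q', hQ', rfl⟩
      by_cases hBB' : B = B'
      · subst hBB'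
        have hQQ' : Q ≠ Q' := fun h => hne (by rw [h])
        exact (pair_upB _ _).2 ((hfam B).1.2.2.2 Q hQ Q' hQ' hQQ')
      · have hBne : B.1 ≠ B'.1 := fun h => hBB' (Subtype.ext h)
        have hdis : Disjoint B.1 B'.1 := hγ.2 B.1 B.2 B'.1 B'.2 hBne
        have hemp : upB B.1 Q ∩ upB B'.1 Q' = ∅ := by
          rw [Finset.eq_empty_iff_forall_notMem]
          intro x hx
          rcases Finset.mem_inter.1 hx with ⟨hx1, hx2⟩
          exact Finset.disjoint_left.1 hdis (upB_subset _ _ hx1) (upB_subset _ _ hx2)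
        rw [hemp]
        refine ⟨by simp, fun j hj => absurd hj ?_⟩
        intro h
        exact absurd (h ▸ Finset.mem_singleton_self j) (Finset.notMem_empty j)
  · refine cPart_eq_of ?_ ?_
    · intro i
      rcases hγ.1.2.1 i with ⟨B, hB, hiB⟩
      rw [compP_glue hB hiB]
      exact hB
    · intro B hB
      rcases hγ.1.1 B hB with ⟨i, hi⟩
      exact ⟨i, compP_glue hB hi⟩

theorem resD_glueU {γ : Finset (Finset (Fin n))} (hγ : IsNC n γ)
    (fam : ∀ B : {B : Finset (Fin n) // B ∈ γ}, Finset (Finset (Fin B.1.card)))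
    (hfam : ∀ B, ∀ Q ∈ fam B, Q.Nonempty) (B : {B : Finset (Fin n) // B ∈ γ}) :
    resD B.1 (glueU γ fam) = fam B := by
  ext Q
  constructor
  · intro hQ
    rcases mem_resD.1 hQ with ⟨P, hP, hPB, rfl⟩
    rcases mem_glueU.1 hP with ⟨B', Q', hQ', rfl⟩
    rcases hfam B' Q' hQ' with ⟨j, hj⟩
    have hx1 : fe B'.1 j ∈ B'.1 := fe_mem _ _
    have hx2 : fe B'.1 j ∈ B.1 := hPB (mem_upB.2 ⟨j, hj, rfl⟩)
    have hBB' : B' = B := by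
      refine Subtype.ext ?_
      by_contra hne
      exact Finset.disjoint_left.1 (hγ.2 B'.1 B'.2 B.1 B.2 hne) hx1 hx2
    subst hBB'
    rw [dwnB_upB]
    exact hQ'
  · intro hQ
    exact mem_resD.2 ⟨upB B.1 Q, mem_glueU.2 ⟨B, Q, hQ, rfl⟩, upB_subset _ _,
      dwnB_upB Q⟩

theorem glueU_resD {π γ : Finset (Finset (Fin n))} (hπ : IsNCL n π)
    (hc : cPart n π = γ) :
    glueU γ (fun B => resD B.1 π) = π := by
  ext P
  constructor
  · intro hP
    rcases mem_glueU.1 hP with ⟨B, Q, hQ, rfl⟩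
    rcases mem_resD.1 hQ with ⟨P', hP', hP'B, rfl⟩
    rw [upB_dwnB hP'B]
    exact hP'
  · intro hP
    rcases exists_block hπ hc hP with ⟨B, hB, hPB⟩
    exact mem_glueU.2 ⟨⟨B, hB⟩, dwnB B P, mem_resD.2 ⟨P, hP, hPB, rfl⟩, upB_dwnB hPB⟩

theorem refines_transfer {a b γ : Finset (Finset (Fin n))} (hb : IsNCL n b)
    (hcb : cPart n b = γ) :
    Refines n a b ↔ ∀ B : {B : Finset (Fin n) // B ∈ γ},
      Refines B.1.card (resD B.1 a) (resD B.1 b) := by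
  constructor
  · intro h B Q hQ
    rcases mem_resD.1 hQ with ⟨P, hPb, hPB, rfl⟩
    rcases h P hPb with ⟨S, hSa, hsup⟩
    refine ⟨S.image (dwnB B.1), ?_, ?_⟩
    · intro Q' hQ'
      rcases Finset.mem_image.1 hQ' with ⟨R, hR, rfl⟩
      have hRB : R ⊆ B.1 := le_trans (Finset.le_sup (f := id) hR) (by rw [← hsup]; exact hPB)
      exact mem_resD.2 ⟨R, hSa hR, hRB, rfl⟩
    · rw [Finset.sup_image, Function.id_comp, ← dwnB_sup, ← hsup]
  · intro h P hPb
    rcases exists_block hb hcb hPb with ⟨B, hB, hPB⟩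
    rcases h ⟨B, hB⟩ (dwnB B P) (mem_resD.2 ⟨P, hPb, hPB, rfl⟩) with ⟨S', hS', hsup⟩
    refine ⟨S'.image (upB B), ?_, ?_⟩
    · intro R hR
      rcases Finset.mem_image.1 hR with ⟨Q', hQ', rfl⟩
      rcases mem_resD.1 (hS' hQ') with ⟨P'', hP'', hP''B, rfl⟩
      rw [upB_dwnB hP''B]
      exact hP''
    · rw [Finset.sup_image, Function.id_comp, ← upB_sup, ← hsup, upB_dwnB hPB]

end FiberAux3


/-- If `γ ∈ NC(n)` has blocks `B_1, …, B_s`, the fiber `[γ] = {π ∈ NCL(n) : c(π) = γ}`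
is order-isomorphic to the product `[1_{k_1}] × ⋯ × [1_{k_s}]` of the sets of connected
non-crossing linked partitions on the block sizes `k_l = |B_l|`. -/
theorem fiber_factorization (n : ℕ) (γ : Finset (Finset (Fin n))) (hγ : IsNC n γ) :
    ∃ e : {π : Finset (Finset (Fin n)) // IsNCL n π ∧ cPart n π = γ} ≃
        (∀ B : {B : Finset (Fin n) // B ∈ γ},
          {π : Finset (Finset (Fin B.1.card)) //
            IsNCL B.1.card π ∧ cPart B.1.card π = {(Finset.univ : Finset (Fin B.1.card))}}),
      ∀ a b, Refines n a.1 b.1 ↔ ∀ B, Refines B.1.card (e a B).1 (e b B).1 := by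
  refine ⟨⟨fun π => fun B => ⟨resD B.1 π.1, resD_mem_fiber π.2.1 π.2.2 B.2⟩,
      fun fam => ⟨glueU γ (fun B => (fam B).1), glueU_mem_fiber hγ _ (fun B => (fam B).2)⟩,
      fun π => Subtype.ext (glueU_resD π.2.1 π.2.2),
      fun fam => funext fun B => Subtype.ext
        (resD_glueU hγ _ (fun B' Q hQ => (fam B').2.1.1 Q hQ) B)⟩,
    fun a b => refines_transfer b.2.1 b.2.2⟩
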